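/- (Hofmann–Mislove style consequence) Every sober topological space X is well-filtered: if Q is a codirected (filtered) family of compact-saturated subsets of X and ⋂Q ⊆ U for some open U, then Q ⊆ U already holds for some Q ∈ Q. -/
import Mathlib


def ScottOpen {X : Type*} [Preorder X] (U : Set X) : Prop :=
  (∀ ⦃x y : X⦄, x ≤ y → x ∈ U → y ∈ U) ∧
  ∀ D : Set X, D.Nonempty → DirectedOn (· ≤ ·) D →
    ∀ a : X, IsLUB D a → a ∈ U → (D ∩ U).Nonempty

def IsDcpo (X : Type*) [Preorder X] : Prop :=
  ∀ D : Set X, D.Nonempty → DirectedOn (· ≤ ·) D → ∃ a : X, IsLUB D a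

def IsFiniteElt {X : Type*} [Preorder X] (d : X) : Prop :=
  ∀ D : Set X, D.Nonempty → DirectedOn (· ≤ ·) D →
    ∀ a : X, IsLUB D a → d ≤ a → ∃ e ∈ D, d ≤ e

def IsAlgebraicDcpo (X : Type*) [Preorder X] : Prop :=
  ∀ x : X, DirectedOn (· ≤ ·) {d : X | IsFiniteElt d ∧ d ≤ x} ∧
    IsLUB {d : X | IsFiniteElt d ∧ d ≤ x} x

def BoundedComplete (X : Type*) [Preorder X] : Prop :=
  ∀ a b : X, (∃ c : X, a ≤ c ∧ b ≤ c) → ∃ s : X, IsLUB {a, b} s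

def scottTop (X : Type*) [Preorder X] : TopologicalSpace X where
  IsOpen := ScottOpen
  isOpen_univ := ⟨fun _ _ _ h => h, fun D hD _ _ _ _ => by
    obtain ⟨d, hd⟩ := hD; exact ⟨d, hd, trivial⟩⟩
  isOpen_inter := fun U V hU hV => by
    constructor
    · intro x y hxy hx; exact ⟨hU.1 hxy hx.1, hV.1 hxy hx.2⟩
    · intro D hne hdir a ha haUV
      obtain ⟨u, huD, huU⟩ := hU.2 D hne hdir a ha haUV.1
      obtain ⟨v, hvD, hvV⟩ := hV.2 D hne hdir a ha haUV.2
      obtain ⟨w, hwD, huw, hvw⟩ := hdir u huD v hvD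
      exact ⟨w, hwD, hU.1 huw huU, hV.1 hvw hvV⟩
  isOpen_sUnion := fun S hS => by
    constructor
    · intro x y hxy hx
      obtain ⟨U, hUS, hxU⟩ := hx
      exact ⟨U, hUS, (hS U hUS).1 hxy hxU⟩
    · intro D hne hdir a ha haS
      obtain ⟨U, hUS, haU⟩ := haS
      obtain ⟨d, hdD, hdU⟩ := (hS U hUS).2 D hne hdir a ha haU
      exact ⟨d, hdD, U, hUS, hdU⟩

def ScottSaturated {X : Type*} [Preorder X] (S : Set X) : Prop :=
  S = ⋂₀ {U : Set X | ScottOpen U ∧ S ⊆ U}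

def Saturated {X : Type*} [TopologicalSpace X] (S : Set X) : Prop :=
  S = ⋂₀ {U : Set X | IsOpen U ∧ S ⊆ U}

def ScottCont' {X Y : Type*} [Preorder X] [Preorder Y] (f : X → Y) : Prop :=
  Monotone f ∧ ∀ D : Set X, D.Nonempty → DirectedOn (· ≤ ·) D →
    ∀ a : X, IsLUB D a → IsLUB (f '' D) (f a)

def ContMap (X Y : Type*) [Preorder X] [Preorder Y] := {f : X → Y // ScottCont' f}

instance {X Y : Type*} [Preorder X] [Preorder Y] : Preorder (ContMap X Y) :=
  Preorder.lift Subtype.val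

open Classical in
noncomputable def stepFun {X Y : Type*} [Preorder X] [Preorder Y] [OrderBot Y]
    (d : X) (e : Y) : X → Y :=
  fun x => if d ≤ x then e else ⊥

/-- Every sober space is well-filtered. -/
theorem sober_wellFiltered {X : Type*} [TopologicalSpace X]
    (hsober : ∀ C : Set X, IsClosed C → C.Nonempty →
      (∀ F G : Set X, IsClosed F → IsClosed G → C ⊆ F ∪ G → C ⊆ F ∨ C ⊆ G) →
      ∃! x : X, C = closure {x})
    (Q : Set (Set X)) (hne : Q.Nonempty) (hdir : DirectedOn (· ⊇ ·) Q)
    (hQ : ∀ q ∈ Q, IsCompact q ∧ Saturated q)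
    (U : Set X) (hU : IsOpen U) (hsub : ⋂₀ Q ⊆ U) :
    ∃ q ∈ Q, q ⊆ U := by
  by_contra hcon
  push_neg at hcon
  -- The "filter" of opens containing some member of Q
  set 𝒰 : Set (Set X) := {V | IsOpen V ∧ ∃ q ∈ Q, q ⊆ V} with h𝒰
  have hUnot : U ∉ 𝒰 := fun ⟨_, q, hq, hqU⟩ => hcon q hq hqU
  -- Zorn over opens containing U not in 𝒰
  set S : Set (Set X) := {W | IsOpen W ∧ U ⊆ W ∧ W ∉ 𝒰} with hS
  have hUS : U ∈ S := ⟨hU, subset_rfl, hUnot⟩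
  have hchaincond : ∀ c ⊆ S, IsChain (· ⊆ ·) c → c.Nonempty →
      ∃ ub ∈ S, ∀ s ∈ c, s ⊆ ub := by
    intro c hcS hchain hcne
    refine ⟨⋃₀ c, ⟨isOpen_sUnion fun V hV => (hcS hV).1,
      ?_, ?_⟩, fun s hs => Set.subset_sUnion_of_mem hs⟩
    · obtain ⟨V, hV⟩ := hcne
      exact (hcS hV).2.1.trans (Set.subset_sUnion_of_mem hV)
    · rintro ⟨-, q, hqQ, hqsub⟩
      haveI : Nonempty c := hcne.to_subtype
      obtain ⟨⟨V, hVc⟩, hqV⟩ := (hQ q hqQ).1.elim_directed_cover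
        (fun V : c => (V : Set X)) (fun V => (hcS V.2).1)
        (by rwa [← Set.sUnion_eq_iUnion])
        (fun a b => by
          rcases hchain.total a.2 b.2 with h | h
          · exact ⟨b, h, subset_rfl⟩
          · exact ⟨a, subset_rfl, h⟩)
      exact (hcS hVc).2.2 ⟨(hcS hVc).1, q, hqQ, hqV⟩
  obtain ⟨W, hUW, hWS, hWmax⟩ := zorn_subset_nonempty S hchaincond U hUS
  obtain ⟨hWopen, hUsubW, hWnot⟩ := hWS
  -- C := Wᶜ is irreducible closed
  set C := Wᶜ with hC
  have hCcl : IsClosed C := isClosed_compl_iff.mpr hWopen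
  have hCne : C.Nonempty := by
    rw [Set.nonempty_compl]
    rintro rfl
    obtain ⟨q, hq⟩ := hne
    exact hWnot ⟨isOpen_univ, q, hq, Set.subset_univ q⟩
  -- key: any open strictly containing W is in 𝒰
  have hbig : ∀ V : Set X, IsOpen V → W ⊆ V → W ≠ V → V ∈ 𝒰 := by
    intro V hVop hWV hne'
    by_contra hV
    exact hne' (le_antisymm hWV (hWmax ⟨hVop, hUsubW.trans hWV, hV⟩ hWV))
  have hirr : ∀ F G : Set X, IsClosed F → IsClosed G → C ⊆ F ∪ G → C ⊆ F ∨ C ⊆ G := by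
    intro F G hF hG hFG
    by_contra hor
    push_neg at hor
    have h1 : W ∪ Fᶜ ∈ 𝒰 := by
      refine hbig _ (hWopen.union hF.isOpen_compl) Set.subset_union_left ?_
      obtain ⟨x, hxC, hxF⟩ := Set.not_subset.mp hor.1
      intro h
      exact hxC (h ▸ Set.mem_union_right W hxF : x ∈ W)
    have h2 : W ∪ Gᶜ ∈ 𝒰 := by
      refine hbig _ (hWopen.union hG.isOpen_compl) Set.subset_union_left ?_
      obtain ⟨x, hxC, hxG⟩ := Set.not_subset.mp hor.2
      intro h
      exact hxC (h ▸ Set.mem_union_right W hxG : x ∈ W)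
    obtain ⟨-, q₁, hq₁, hq₁sub⟩ := h1
    obtain ⟨-, q₂, hq₂, hq₂sub⟩ := h2
    obtain ⟨q, hq, hqq₁, hqq₂⟩ := hdir q₁ hq₁ q₂ hq₂
    refine hWnot ⟨hWopen, q, hq, fun x hx => ?_⟩
    rcases hq₁sub (hqq₁ hx) with h | h
    · exact h
    · rcases hq₂sub (hqq₂ hx) with h' | h'
      · exact h'
      · by_contra hxW
        rcases hFG hxW with hxF | hxG
        · exact h hxF
        · exact h' hxG
  obtain ⟨x, hx, -⟩ := hsober C hCcl hCne hirr
  have hxC : x ∈ C := hx ▸ subset_closure rfl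
  -- x belongs to every open in 𝒰
  have hx𝒰 : ∀ V ∈ 𝒰, x ∈ V := by
    rintro V ⟨hVop, q, hqQ, hqV⟩
    by_contra hxV
    have hCV : C ⊆ Vᶜ := by
      rw [hx]
      exact closure_minimal (Set.singleton_subset_iff.mpr hxV) hVop.isClosed_compl
    refine hWnot ⟨hWopen, q, hqQ, hqV.trans fun y hyV => ?_⟩
    by_contra hyW
    exact hCV hyW hyV
  -- hence x ∈ ⋂₀ Q ⊆ U ⊆ W, contradicting x ∈ C = Wᶜ
  have hxQ : x ∈ ⋂₀ Q := by
    intro q hqQ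
    have hsat := (hQ q hqQ).2
    rw [Saturated] at hsat
    rw [hsat]
    rintro V ⟨hVop, hqV⟩
    exact hx𝒰 V ⟨hVop, q, hqQ, hqV⟩
  exact hxC (hUsubW (hsub hxQ))
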